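/- Suppose the gains K̄_χ ∈ ℝ^{m×n} (χ ∈ X̄) satisfy the constraint K̄_{(α,β,γ,δ)} = K̄_{(α',β',γ,δ)} for all α, α' ∈ {1,…,N}, β, β' ∈ {1,…,M}, γ ∈ {1,…,N}, δ ∈ {1,…,T}, and suppose there exist C > 0 and ε ∈ [0,1) such that for every time-homogeneous Markov chain θ on X̄ with transition matrix p̄ and any deterministic initial state θ(0) = χ₀ ∈ X̄, and every x̄₀ ∈ ℝⁿ, the solution of x̄(k+1) = (A_{α(θ(k))} + B_{α(θ(k))} K̄_{θ(k)}) x̄(k), x̄(0) = x̄₀, where α(χ) denotes the first component of χ ∈ X̄, satisfies E[‖x̄(k)‖²] ≤ C ε^k ‖x̄₀‖² for all k ∈ ℕ. Define K_{γ,δ} = K̄_{(1,1,γ,δ)} for γ ∈ {1,…,N}, δ ∈ {1,…,T}. Then the gains K stabilize (Σ, 𝒯_{s,Λ}). -/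

import Mathlib

open MeasureTheory ProbabilityTheory

/-- `flT T k : Fin T` represents `⌊k⌋_T`, the unique element of `{1,…,T}` such that
`k − ⌊k⌋_T` is divisible by `T`; the element `d : Fin T` encodes the value `d.val + 1`. -/
def flT (T : ℕ) [NeZero T] (k : ℤ) : Fin T :=
  ⟨((k - 1) % (T : ℤ)).toNat, by
    have hT : (0:ℤ) < (T:ℤ) := by exact_mod_cast Nat.pos_of_ne_zero (NeZero.ne T)
    have h1 : 0 ≤ (k - 1) % (T:ℤ) := Int.emod_nonneg _ (ne_of_gt hT)
    have h2 : (k - 1) % (T:ℤ) < (T:ℤ) := Int.emod_lt_of_pos _ hT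
    omega⟩

/-- `τ(k)`: the most recent observation time `≤ k`, i.e. the largest `j ≤ k` with
`s j ∈ Λ`, and `τ₀` if no observation has occurred yet. -/
noncomputable def tauProc {M : ℕ} {Ω : Type*} (Λ : Set (Fin M)) (s : ℕ → Ω → Fin M)
    (τ0 : ℤ) (k : ℕ) (ω : Ω) : ℤ := by
  classical
  exact if ∃ j ≤ k, s j ω ∈ Λ then
    ((Nat.findGreatest (fun j => s j ω ∈ Λ) k : ℕ) : ℤ) else τ0

/-- `σ(k) = r(τ(k))` for `k ≥ t₀` and `σ₀` before the first observation. -/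
noncomputable def sigmaProc {N M : ℕ} {Ω : Type*} (Λ : Set (Fin M))
    (r : ℕ → Ω → Fin N) (s : ℕ → Ω → Fin M) (σ0 : Fin N) (k : ℕ) (ω : Ω) : Fin N := by
  classical
  exact if ∃ j ≤ k, s j ω ∈ Λ then r (Nat.findGreatest (fun j => s j ω ∈ Λ) k) ω else σ0

/-- The extended process `r̄(k) = (r(k), s(k), σ(k), ⌊k+1−τ(k)⌋_T)`. -/
noncomputable def rbar {N M : ℕ} (T : ℕ) [NeZero T] {Ω : Type*} (Λ : Set (Fin M))
    (r : ℕ → Ω → Fin N) (s : ℕ → Ω → Fin M) (τ0 : ℤ) (σ0 : Fin N) (k : ℕ) (ω : Ω) :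
    Fin N × Fin M × Fin N × Fin T :=
  (r k ω, s k ω, sigmaProc Λ r s σ0 k ω, flT T ((k : ℤ) + 1 - tauProc Λ s τ0 k ω))

/-- The transition matrix `p̄` on `X̄ = {1,…,N} × {1,…,M} × {1,…,N} × {1,…,T}`.
Recall that `δ : Fin T` encodes the value `δ.val + 1`, so `flT T 1 = 0` encodes the
value `1` and `δ + 1` (cyclic `Fin` addition) encodes `⌊δ + 1⌋_T`. -/
noncomputable def pbar {N M T : ℕ} [NeZero T] (P : Matrix (Fin N) (Fin N) ℝ)
    (Q : Matrix (Fin M) (Fin M) ℝ) (Λ : Set (Fin M))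
    (χ χ' : Fin N × Fin M × Fin N × Fin T) : ℝ := by
  classical
  exact
    if χ'.2.1 ∈ Λ then
      if χ'.1 = χ'.2.2.1 ∧ χ'.2.2.2 = flT T 1 then P χ.1 χ'.1 * Q χ.2.1 χ'.2.1 else 0
    else
      if χ'.2.2.1 = χ.2.2.1 ∧ χ'.2.2.2 = χ.2.2.2 + 1 then P χ.1 χ'.1 * Q χ.2.1 χ'.2.1 else 0

/-- A row-stochastic matrix. -/
def RowStochastic {I : Type*} [Fintype I] (P : I → I → ℝ) : Prop :=
  (∀ i j, 0 ≤ P i j) ∧ ∀ i, ∑ j, P i j = 1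

/-- The pair `(r, s)` is a time-homogeneous Markov chain with product transition
probabilities `P ⊗ Q`: conditional on any history of positive probability. -/
def IsPairMarkov {N M : ℕ} {Ω : Type*} [MeasurableSpace Ω] (μ : Measure Ω)
    (r : ℕ → Ω → Fin N) (s : ℕ → Ω → Fin M)
    (P : Matrix (Fin N) (Fin N) ℝ) (Q : Matrix (Fin M) (Fin M) ℝ) : Prop :=
  ∀ (k : ℕ) (a : ℕ → Fin N) (b : ℕ → Fin M),
    μ {ω | ∀ j ≤ k, r j ω = a j ∧ s j ω = b j} ≠ 0 →
    ∀ (α' : Fin N) (β' : Fin M),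
      ProbabilityTheory.cond μ {ω | ∀ j ≤ k, r j ω = a j ∧ s j ω = b j}
          {ω | r (k+1) ω = α' ∧ s (k+1) ω = β'}
        = ENNReal.ofReal (P (a k) α' * Q (b k) β')

/-- A time-homogeneous Markov chain on a (finite) state space `S` with transition
matrix `P`. -/
def IsMarkov {S : Type*} {Ω : Type*} [MeasurableSpace Ω] (μ : Measure Ω)
    (X : ℕ → Ω → S) (P : S → S → ℝ) : Prop :=
  ∀ (k : ℕ) (c : ℕ → S),
    μ {ω | ∀ i ≤ k, X i ω = c i} ≠ 0 →
    ∀ j : S,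
      ProbabilityTheory.cond μ {ω | ∀ i ≤ k, X i ω = c i} {ω | X (k+1) ω = j}
        = ENNReal.ofReal (P (c k) j)

/-- The gains `K` stabilize `(Σ, 𝒯_{s,Λ})` (with the initial state `s₀` of the
observation chain restricted to `S0`): there are `C > 0` and `ε ∈ [0,1)` such that
`E[‖x(k)‖²] ≤ C ε^k ‖x₀‖²` for every realization of the closed loop, every initial
condition `x₀, r₀, s₀ ∈ S0, τ₀ < 0, σ₀` and every `k`. -/
def StabilizesOn {n m N M T : ℕ} [NeZero T]
    (A : Fin N → Matrix (Fin n) (Fin n) ℝ) (B : Fin N → Matrix (Fin n) (Fin m) ℝ)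
    (P : Matrix (Fin N) (Fin N) ℝ) (Q : Matrix (Fin M) (Fin M) ℝ)
    (Λ : Set (Fin M)) (S0 : Set (Fin M))
    (K : Fin N → Fin T → Matrix (Fin m) (Fin n) ℝ) : Prop :=
  ∃ C > (0:ℝ), ∃ ε ∈ Set.Ico (0:ℝ) 1,
    ∀ (Ω : Type) [MeasurableSpace Ω] (μ : Measure Ω), IsProbabilityMeasure μ →
    ∀ (r : ℕ → Ω → Fin N) (s : ℕ → Ω → Fin M) (r₀ : Fin N) (s₀ : Fin M),
      s₀ ∈ S0 → (∀ ω, r 0 ω = r₀) → (∀ ω, s 0 ω = s₀) →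
      IsPairMarkov μ r s P Q →
      μ {ω | {k : ℕ | s k ω ∈ Λ}.Infinite} = 1 →
      ∀ τ₀ : ℤ, τ₀ < 0 → ∀ (σ₀ : Fin N) (x₀ : EuclideanSpace ℝ (Fin n))
        (x : ℕ → Ω → EuclideanSpace ℝ (Fin n)),
        (∀ ω, x 0 ω = x₀) →
        (∀ (k : ℕ) (ω : Ω), x (k+1) ω =
          Matrix.toEuclideanLin (A (r k ω) + B (r k ω) * K (sigmaProc Λ r s σ₀ k ω)
            (flT T ((k : ℤ) + 1 - tauProc Λ s τ₀ k ω))) (x k ω)) →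
        ∀ k : ℕ, ∫ ω, ‖x k ω‖^2 ∂μ ≤ C * ε^k * ‖x₀‖^2

lemma ennreal_pinch {ι : Type*} [Fintype ι] [DecidableEq ι] (a b : ι → ENNReal) (hab : ∀ i, a i ≤ b i)
    (hb : ∀ i, b i ≠ ⊤) (hs : ∑ i, b i ≤ ∑ i, a i) : ∀ i, a i = b i := by
  intro i
  refine le_antisymm (hab i) ?_
  have hea : ∑ j ∈ Finset.univ.erase i, a j ≤ ∑ j ∈ Finset.univ.erase i, b j :=
    Finset.sum_le_sum fun j _ => hab j
  have heb : ∑ j ∈ Finset.univ.erase i, b j ≠ ⊤ := by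
    rw [ne_eq, ENNReal.sum_eq_top]
    push_neg
    exact fun j _ => hb j
  have hea' : ∑ j ∈ Finset.univ.erase i, a j ≠ ⊤ := (lt_of_le_of_lt hea heb.lt_top).ne
  have h1 : b i + ∑ j ∈ Finset.univ.erase i, a j ≤ a i + ∑ j ∈ Finset.univ.erase i, a j := by
    calc b i + ∑ j ∈ Finset.univ.erase i, a j
        ≤ b i + ∑ j ∈ Finset.univ.erase i, b j := by gcongr
      _ = ∑ j, b j := Finset.add_sum_erase _ b (Finset.mem_univ i)
      _ ≤ ∑ j, a j := hs
      _ = a i + ∑ j ∈ Finset.univ.erase i, a j := (Finset.add_sum_erase _ a (Finset.mem_univ i)).symm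
  exact (ENNReal.add_le_add_iff_right hea').1 h1

lemma flT_succ (T : ℕ) [NeZero T] (z : ℤ) : flT T (z + 1) = flT T z + 1 := by
  have hT : (0:ℤ) < (T:ℤ) := by exact_mod_cast Nat.pos_of_ne_zero (NeZero.ne T)
  apply Fin.ext
  rw [Fin.add_def]
  show ((z + 1 - 1) % (T:ℤ)).toNat = (((z - 1) % (T:ℤ)).toNat + (1 : Fin T).val) % T
  have h1 : 0 ≤ (z - 1) % (T:ℤ) := Int.emod_nonneg _ (ne_of_gt hT)
  have h2 : (z - 1) % (T:ℤ) < T := Int.emod_lt_of_pos _ hT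
  have h3 : 0 ≤ z % (T:ℤ) := Int.emod_nonneg _ (ne_of_gt hT)
  rw [Fin.val_one']
  set A := ((z - 1) % (T:ℤ)).toNat with hA
  have hAT : A < T := by omega
  have hmod : (A + 1 % T) % T = (A + 1) % T := by
    conv_rhs => rw [Nat.add_mod, Nat.mod_eq_of_lt hAT]
  rw [show z + 1 - 1 = z by ring, hmod]
  have hcast : (((A + 1) % T : ℕ) : ℤ) = z % T := by
    push_cast
    rw [Int.toNat_of_nonneg h1, Int.emod_add_emod, sub_add_cancel]
  omega
namespace StabProof
noncomputable section

variable {N M : ℕ}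

def pairTrans (P : Matrix (Fin N) (Fin N) ℝ) (Q : Matrix (Fin M) (Fin M) ℝ)
    (u v : Fin N × Fin M) : ℝ := P u.1 v.1 * Q u.2 v.2

def W (P : Matrix (Fin N) (Fin N) ℝ) (Q : Matrix (Fin M) (Fin M) ℝ)
    (r₀ : Fin N) (s₀ : Fin M) (d : ℕ → Fin N × Fin M) : ℕ → ℝ
  | 0 => if d 0 = (r₀, s₀) then 1 else 0
  | (l+1) => W P Q r₀ s₀ d l * pairTrans P Q (d l) (d (l+1))

def extP (l : ℕ) (d : Fin (l+1) → Fin N × Fin M) : ℕ → Fin N × Fin M :=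
  fun j => d ⟨min j l, Nat.lt_succ_of_le (min_le_right j l)⟩

lemma extP_eq (l : ℕ) (d : Fin (l+1) → Fin N × Fin M) (j : ℕ) (hj : j ≤ l) :
    extP l d j = d ⟨j, Nat.lt_succ_of_le hj⟩ := by
  simp only [extP]
  congr 1
  exact Fin.ext (by simp [min_eq_left hj])

variable {Ω : Type} [MeasurableSpace Ω]

def cyl (r : ℕ → Ω → Fin N) (s : ℕ → Ω → Fin M) (l : ℕ) (d : ℕ → Fin N × Fin M) : Set Ω :=
  {ω | ∀ j ≤ l, r j ω = (d j).1 ∧ s j ω = (d j).2}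

lemma W_congr (P : Matrix (Fin N) (Fin N) ℝ) (Q : Matrix (Fin M) (Fin M) ℝ)
    (r₀ : Fin N) (s₀ : Fin M) {d d' : ℕ → Fin N × Fin M} :
    ∀ {l : ℕ}, (∀ j ≤ l, d j = d' j) → W P Q r₀ s₀ d l = W P Q r₀ s₀ d' l
  | 0, h => by simp [W, h 0 le_rfl]
  | (l+1), h => by
      simp only [W]
      rw [W_congr P Q r₀ s₀ (fun j hj => h j (hj.trans l.le_succ)),
        h l l.le_succ, h (l+1) le_rfl]

omit [MeasurableSpace Ω] in
lemma cyl_congr (r : ℕ → Ω → Fin N) (s : ℕ → Ω → Fin M) (l : ℕ) {d d' : ℕ → Fin N × Fin M}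
    (h : ∀ j ≤ l, d j = d' j) : cyl r s l d = cyl r s l d' := by
  unfold cyl
  ext ω
  constructor <;> intro hω j hj
  · rw [← h j hj]; exact hω j hj
  · rw [h j hj]; exact hω j hj

lemma W_nonneg (P : Matrix (Fin N) (Fin N) ℝ) (Q : Matrix (Fin M) (Fin M) ℝ)
    (hP : RowStochastic P) (hQ : RowStochastic Q) (r₀ : Fin N) (s₀ : Fin M)
    (d : ℕ → Fin N × Fin M) : ∀ l, 0 ≤ W P Q r₀ s₀ d l
  | 0 => by unfold W; positivity
  | (l+1) => mul_nonneg (W_nonneg P Q hP hQ r₀ s₀ d l)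
      (mul_nonneg (hP.1 _ _) (hQ.1 _ _))

lemma sum_pairTrans (P : Matrix (Fin N) (Fin N) ℝ) (Q : Matrix (Fin M) (Fin M) ℝ)
    (hP : RowStochastic P) (hQ : RowStochastic Q) (u : Fin N × Fin M) :
    ∑ v : Fin N × Fin M, pairTrans P Q u v = 1 := by
  rw [Fintype.sum_prod_type]
  simp only [pairTrans]
  rw [← Finset.sum_mul_sum]
  rw [hP.2 u.1, hQ.2 u.2, mul_one]

lemma sum_W (P : Matrix (Fin N) (Fin N) ℝ) (Q : Matrix (Fin M) (Fin M) ℝ)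
    (hP : RowStochastic P) (hQ : RowStochastic Q) (r₀ : Fin N) (s₀ : Fin M) :
    ∀ l : ℕ, ∑ d : Fin (l+1) → Fin N × Fin M, W P Q r₀ s₀ (extP l d) l = 1
  | 0 => by
      rw [Fintype.sum_equiv (Equiv.funUnique (Fin 1) (Fin N × Fin M))
        _ (fun v => if v = (r₀, s₀) then (1:ℝ) else 0)]
      · simp
      · intro d
        simp only [W, Equiv.funUnique]
        rfl
  | (l+1) => by
      classical
      rw [Fintype.sum_equiv ((Fin.insertNthEquiv (fun _ : Fin (l+2) => (Fin N × Fin M))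
            (Fin.last (l+1))).symm)
        _ (fun p => W P Q r₀ s₀ (extP l p.2) l * pairTrans P Q (extP l p.2 l) p.1)]
      · rw [Fintype.sum_prod_type, Finset.sum_comm]
        have : ∀ d' : Fin (l+1) → Fin N × Fin M,
            ∑ v : Fin N × Fin M, W P Q r₀ s₀ (extP l d') l * pairTrans P Q (extP l d' l) v
              = W P Q r₀ s₀ (extP l d') l := by
          intro d'
          rw [← Finset.mul_sum, sum_pairTrans P Q hP hQ, mul_one]
        rw [Finset.sum_congr rfl (fun d' _ => this d')]
        exact sum_W P Q hP hQ r₀ s₀ l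
      · intro d
        have hagree : ∀ j ≤ l, extP (l+1) d j
            = extP l (fun i => d ((Fin.last (l+1)).succAbove i)) j := by
          intro j hj
          rw [extP_eq _ _ j (hj.trans (Nat.le_succ l)), extP_eq _ _ j hj]
          congr 1
          apply Fin.ext
          simp [Fin.succAbove_last]
        show W P Q r₀ s₀ (extP (l+1) d) l * pairTrans P Q (extP (l+1) d l) (extP (l+1) d (l+1)) = _
        simp only [Fin.insertNthEquiv, Equiv.symm, Equiv.coe_fn_mk]
        rw [W_congr P Q r₀ s₀ hagree, hagree l le_rfl,
          extP_eq _ _ (l+1) le_rfl]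
        rfl
variable (μ : Measure Ω) [IsProbabilityMeasure μ]
  (r : ℕ → Ω → Fin N) (s : ℕ → Ω → Fin M)
  (P : Matrix (Fin N) (Fin N) ℝ) (Q : Matrix (Fin M) (Fin M) ℝ)
  (r₀ : Fin N) (s₀ : Fin M)

lemma cond_eq (E t : Set Ω) : ProbabilityTheory.cond μ E t = (μ E)⁻¹ * μ.restrict E t := by
  rw [ProbabilityTheory.cond]
  simp [Measure.smul_apply, smul_eq_mul]

lemma restrict_eq_of_cond (E t : Set Ω) (hE : μ E ≠ 0) (v : ENNReal)
    (h : ProbabilityTheory.cond μ E t = v) : μ.restrict E t = v * μ E := by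
  rw [cond_eq] at h
  have hfin : μ E ≠ ⊤ := (measure_lt_top μ E).ne
  calc μ.restrict E t = ((μ E) * (μ E)⁻¹) * μ.restrict E t := by
        rw [ENNReal.mul_inv_cancel hE hfin, one_mul]
    _ = μ E * ((μ E)⁻¹ * μ.restrict E t) := by ring
    _ = μ E * v := by rw [h]
    _ = v * μ E := mul_comm _ _

lemma mu_cyl_le (hP : RowStochastic P) (hQ : RowStochastic Q)
    (hr0 : ∀ ω, r 0 ω = r₀) (hs0 : ∀ ω, s 0 ω = s₀)
    (hpm : IsPairMarkov μ r s P Q) :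
    ∀ (l : ℕ) (d : ℕ → Fin N × Fin M), μ (cyl r s l d) ≤ ENNReal.ofReal (W P Q r₀ s₀ d l)
  | 0, d => by
      by_cases h : d 0 = (r₀, s₀)
      · simp only [W, if_pos h, ENNReal.ofReal_one]
        exact prob_le_one
      · have hempty : cyl r s 0 d = ∅ := by
          ext ω
          simp only [cyl, Set.mem_setOf_eq, Set.mem_empty_iff_false, iff_false]
          intro hω
          obtain ⟨h1, h2⟩ := hω 0 le_rfl
          exact h (Prod.ext (by rw [← h1, hr0]) (by rw [← h2, hs0]))
        rw [hempty, measure_empty]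
        exact zero_le
  | (l+1), d => by
      have hsub : cyl r s (l+1) d
          = {ω | r (l+1) ω = (d (l+1)).1 ∧ s (l+1) ω = (d (l+1)).2} ∩ cyl r s l d := by
        ext ω
        constructor
        · intro hω
          exact ⟨hω (l+1) le_rfl, fun j hj => hω j (hj.trans l.le_succ)⟩
        · rintro ⟨h1, h2⟩ j hj
          rcases Nat.lt_or_ge j (l+1) with hj' | hj'
          · exact h2 j (Nat.lt_succ_iff.1 hj')
          · have hj2 : j = l+1 := le_antisymm hj hj'
            rw [hj2]; exact h1
      by_cases h0 : μ (cyl r s l d) = 0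
      · calc μ (cyl r s (l+1) d) ≤ μ (cyl r s l d) := by
              rw [hsub]; exact measure_mono Set.inter_subset_right
          _ = 0 := h0
          _ ≤ _ := zero_le
      · have hc := hpm l (fun j => (d j).1) (fun j => (d j).2) h0 ((d (l+1)).1) ((d (l+1)).2)
        have hres := restrict_eq_of_cond μ (cyl r s l d)
          {ω | r (l+1) ω = (d (l+1)).1 ∧ s (l+1) ω = (d (l+1)).2} h0 _ hc
        calc μ (cyl r s (l+1) d)
            = μ ({ω | r (l+1) ω = (d (l+1)).1 ∧ s (l+1) ω = (d (l+1)).2} ∩ cyl r s l d) := by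
              rw [hsub]
          _ ≤ μ.restrict (cyl r s l d) {ω | r (l+1) ω = (d (l+1)).1 ∧ s (l+1) ω = (d (l+1)).2} :=
              Measure.le_restrict_apply _ _
          _ = ENNReal.ofReal (P (d l).1 (d (l+1)).1 * Q (d l).2 (d (l+1)).2) * μ (cyl r s l d) :=
              hres
          _ ≤ ENNReal.ofReal (P (d l).1 (d (l+1)).1 * Q (d l).2 (d (l+1)).2)
                * ENNReal.ofReal (W P Q r₀ s₀ d l) := by
              gcongr
              exact mu_cyl_le hP hQ hr0 hs0 hpm l d
          _ = ENNReal.ofReal (W P Q r₀ s₀ d (l+1)) := by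
              rw [show W P Q r₀ s₀ d (l+1) = W P Q r₀ s₀ d l * pairTrans P Q (d l) (d (l+1))
                  from rfl]
              rw [ENNReal.ofReal_mul (W_nonneg P Q hP hQ r₀ s₀ d l), mul_comm]
              rfl

lemma mu_cyl_eq (hP : RowStochastic P) (hQ : RowStochastic Q)
    (hr0 : ∀ ω, r 0 ω = r₀) (hs0 : ∀ ω, s 0 ω = s₀)
    (hpm : IsPairMarkov μ r s P Q) (l : ℕ) (d : Fin (l+1) → Fin N × Fin M) :
    μ (cyl r s l (extP l d)) = ENNReal.ofReal (W P Q r₀ s₀ (extP l d) l) := by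
  classical
  have cover : (Set.univ : Set Ω) ⊆ ⋃ d' : Fin (l+1) → Fin N × Fin M, cyl r s l (extP l d') := by
    intro ω _
    refine Set.mem_iUnion.2 ⟨fun j => (r j ω, s j ω), ?_⟩
    intro j hj
    rw [extP_eq l _ j hj]
    exact ⟨rfl, rfl⟩
  have hsum : ∑ d' : Fin (l+1) → Fin N × Fin M, ENNReal.ofReal (W P Q r₀ s₀ (extP l d') l)
      = 1 := by
    rw [← ENNReal.ofReal_sum_of_nonneg (fun d' _ => W_nonneg P Q hP hQ r₀ s₀ _ l),
      sum_W P Q hP hQ r₀ s₀ l, ENNReal.ofReal_one]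
  have hle : ∑ d' : Fin (l+1) → Fin N × Fin M, ENNReal.ofReal (W P Q r₀ s₀ (extP l d') l)
      ≤ ∑ d' : Fin (l+1) → Fin N × Fin M, μ (cyl r s l (extP l d')) := by
    rw [hsum]
    calc (1:ENNReal) = μ Set.univ := measure_univ.symm
      _ ≤ μ (⋃ d' : Fin (l+1) → Fin N × Fin M, cyl r s l (extP l d')) := measure_mono cover
      _ ≤ ∑ d' : Fin (l+1) → Fin N × Fin M, μ (cyl r s l (extP l d')) :=
          measure_iUnion_fintype_le μ _
  exact ennreal_pinch (fun d' => μ (cyl r s l (extP l d')))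
    (fun d' => ENNReal.ofReal (W P Q r₀ s₀ (extP l d') l))
    (fun d' => mu_cyl_le μ r s P Q r₀ s₀ hP hQ hr0 hs0 hpm l (extP l d'))
    (fun _ => ENNReal.ofReal_ne_top) hle d
lemma hull_inter (hP : RowStochastic P) (hQ : RowStochastic Q)
    (hr0 : ∀ ω, r 0 ω = r₀) (hs0 : ∀ ω, s 0 ω = s₀)
    (hpm : IsPairMarkov μ r s P Q) (l : ℕ) {d d' : Fin (l+1) → Fin N × Fin M} (hne : d ≠ d') :
    μ (toMeasurable μ (cyl r s l (extP l d)) ∩ toMeasurable μ (cyl r s l (extP l d'))) = 0 := by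
  classical
  set H : (Fin (l+1) → Fin N × Fin M) → Set Ω :=
    fun x => toMeasurable μ (cyl r s l (extP l x)) with hH
  have hμH : ∀ x, μ (H x) = ENNReal.ofReal (W P Q r₀ s₀ (extP l x) l) := fun x => by
    rw [hH, measure_toMeasurable]
    exact mu_cyl_eq μ r s P Q r₀ s₀ hP hQ hr0 hs0 hpm l x
  have hsumH : ∑ x : Fin (l+1) → Fin N × Fin M, μ (H x) = 1 := by
    rw [Finset.sum_congr rfl (fun x _ => hμH x),
      ← ENNReal.ofReal_sum_of_nonneg (fun x _ => W_nonneg P Q hP hQ r₀ s₀ _ l),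
      sum_W P Q hP hQ r₀ s₀ l, ENNReal.ofReal_one]
  set Sr := (Finset.univ.erase d).erase d' with hSr
  have hR : ∑ x ∈ Sr, μ (H x) ≠ ⊤ := by
    refine (lt_of_le_of_lt (Finset.sum_le_sum_of_subset (Finset.subset_univ Sr)) ?_).ne
    rw [hsumH]
    exact ENNReal.one_lt_top
  have hsplit : μ (H d) + μ (H d') + ∑ x ∈ Sr, μ (H x) = 1 := by
    rw [← hsumH, ← Finset.add_sum_erase _ _ (Finset.mem_univ d), add_assoc,
      ← Finset.add_sum_erase _ (fun x => μ (H x))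
        (Finset.mem_erase.2 ⟨fun h => hne h.symm, Finset.mem_univ d'⟩)]
  have hcover : μ (H d) + μ (H d') + ∑ x ∈ Sr, μ (H x)
      ≤ μ (H d ∪ H d') + ∑ x ∈ Sr, μ (H x) := by
    rw [hsplit]
    calc (1:ENNReal) = μ Set.univ := measure_univ.symm
      _ ≤ μ ((H d ∪ H d') ∪ ⋃ x ∈ Sr, H x) := by
          refine measure_mono ?_
          intro ω _
          have : ω ∈ ⋃ x : Fin (l+1) → Fin N × Fin M, H x := by
            refine Set.mem_iUnion.2 ⟨fun j => (r j ω, s j ω), ?_⟩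
            refine subset_toMeasurable μ _ ?_
            intro j hj
            rw [extP_eq l _ j hj]
            exact ⟨rfl, rfl⟩
          obtain ⟨x, hx⟩ := Set.mem_iUnion.1 this
          by_cases h1 : x = d
          · exact Or.inl (Or.inl (h1 ▸ hx))
          by_cases h2 : x = d'
          · exact Or.inl (Or.inr (h2 ▸ hx))
          · exact Or.inr (Set.mem_biUnion (Finset.mem_coe.2
              (Finset.mem_erase.2 ⟨h2, Finset.mem_erase.2 ⟨h1, Finset.mem_univ x⟩⟩)) hx)
      _ ≤ μ (H d ∪ H d') + μ (⋃ x ∈ Sr, H x) := measure_union_le _ _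
      _ ≤ μ (H d ∪ H d') + ∑ x ∈ Sr, μ (H x) := by
          gcongr
          exact measure_biUnion_finset_le _ _
  have h2 : μ (H d) + μ (H d') ≤ μ (H d ∪ H d') :=
    (ENNReal.add_le_add_iff_right hR).1 hcover
  have h3 : μ (H d ∪ H d') + μ (H d ∩ H d') = μ (H d) + μ (H d') :=
    measure_union_add_inter (H d) (measurableSet_toMeasurable μ _)
  have hU : μ (H d ∪ H d') ≠ ⊤ := (measure_lt_top μ _).ne
  have h4 : μ (H d ∪ H d') + μ (H d ∩ H d') ≤ μ (H d ∪ H d') + 0 := by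
    rw [add_zero, h3]
    exact h2
  exact le_antisymm ((ENNReal.add_le_add_iff_left hU).1 h4) zero_le

lemma mu_biUnion_cyl (hP : RowStochastic P) (hQ : RowStochastic Q)
    (hr0 : ∀ ω, r 0 ω = r₀) (hs0 : ∀ ω, s 0 ω = s₀)
    (hpm : IsPairMarkov μ r s P Q) (l : ℕ) (S : Finset (Fin (l+1) → Fin N × Fin M)) :
    μ (⋃ d ∈ S, cyl r s l (extP l d)) = ∑ d ∈ S, ENNReal.ofReal (W P Q r₀ s₀ (extP l d) l) := by
  classical
  refine le_antisymm ?_ ?_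
  · calc μ (⋃ d ∈ S, cyl r s l (extP l d)) ≤ ∑ d ∈ S, μ (cyl r s l (extP l d)) :=
        measure_biUnion_finset_le _ _
      _ = ∑ d ∈ S, ENNReal.ofReal (W P Q r₀ s₀ (extP l d) l) :=
        Finset.sum_congr rfl (fun d _ => mu_cyl_eq μ r s P Q r₀ s₀ hP hQ hr0 hs0 hpm l d)
  · set u := toMeasurable μ (⋃ d ∈ S, cyl r s l (extP l d)) with hu
    have hsub : ∀ d ∈ S, cyl r s l (extP l d) ⊆ u := by
      intro d hd ω hω
      exact subset_toMeasurable μ _ (Set.mem_iUnion₂.2 ⟨d, hd, hω⟩)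
    have hdisj : (↑S : Set (Fin (l+1) → Fin N × Fin M)).Pairwise
        (Function.onFun (MeasureTheory.AEDisjoint μ) fun d => u ∩ toMeasurable μ (cyl r s l (extP l d))) := by
      intro x hx y hy hxy
      refine measure_mono_null ?_ (hull_inter μ r s P Q r₀ s₀ hP hQ hr0 hs0 hpm l hxy)
      intro ω hω
      exact ⟨hω.1.2, hω.2.2⟩
    calc ∑ d ∈ S, ENNReal.ofReal (W P Q r₀ s₀ (extP l d) l)
        = ∑ d ∈ S, μ (cyl r s l (extP l d)) :=
          (Finset.sum_congr rfl (fun d _ => mu_cyl_eq μ r s P Q r₀ s₀ hP hQ hr0 hs0 hpm l d)).symm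
      _ ≤ ∑ d ∈ S, μ (u ∩ toMeasurable μ (cyl r s l (extP l d))) :=
          Finset.sum_le_sum (fun d hd => measure_mono
            (Set.subset_inter (hsub d hd) (subset_toMeasurable μ _)))
      _ = μ (⋃ d ∈ S, u ∩ toMeasurable μ (cyl r s l (extP l d))) :=
          (measure_biUnion_finset₀ hdisj (fun d _ =>
            ((measurableSet_toMeasurable μ _).inter
              (measurableSet_toMeasurable μ _)).nullMeasurableSet)).symm
      _ ≤ μ u := measure_mono (by
          intro ω hω
          obtain ⟨d, _, hω2⟩ := Set.mem_iUnion₂.1 hω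
          exact hω2.1)
      _ = μ (⋃ d ∈ S, cyl r s l (extP l d)) := measure_toMeasurable _
lemma restrict_biUnion (hP : RowStochastic P) (hQ : RowStochastic Q)
    (hr0 : ∀ ω, r 0 ω = r₀) (hs0 : ∀ ω, s 0 ω = s₀)
    (hpm : IsPairMarkov μ r s P Q) (k : ℕ) (d₀ : Fin (k+1) → Fin N × Fin M)
    (S : Finset (Fin (k+2) → Fin N × Fin M)) :
    μ.restrict (cyl r s k (extP k d₀)) (⋃ d ∈ S, cyl r s (k+1) (extP (k+1) d))
      = ∑ d ∈ S.filter (fun d => ∀ j : Fin (k+1), d j.castSucc = d₀ j),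
          ENNReal.ofReal (W P Q r₀ s₀ (extP (k+1) d) (k+1)) := by
  classical
  set E := cyl r s k (extP k d₀) with hE
  set t := ⋃ d ∈ S, cyl r s (k+1) (extP (k+1) d) with ht
  set pred : (Fin (k+2) → Fin N × Fin M) → Prop := fun d => ∀ j : Fin (k+1), d j.castSucc = d₀ j
    with hpred
  set F := S.filter pred with hF
  have hagree : ∀ (d : Fin (k+2) → Fin N × Fin M), pred d →
      ∀ j ≤ k, extP (k+1) d j = extP k d₀ j := by
    intro d hd j hj
    rw [extP_eq (k+1) d j (hj.trans (Nat.le_succ k)), extP_eq k d₀ j hj,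
      ← hd ⟨j, Nat.lt_succ_of_le hj⟩]
    exact congrArg d (Fin.ext rfl)
  have hmem_pred : ∀ ω ∈ E, pred (fun j : Fin (k+2) => (r j.val ω, s j.val ω)) := by
    intro ω hω j
    have h1 := hω j.val (Nat.lt_succ_iff.1 j.isLt)
    rw [extP_eq k d₀ j.val (Nat.lt_succ_iff.1 j.isLt)] at h1
    exact Prod.ext h1.1 h1.2
  have hself : ∀ (l : ℕ) (ω : Ω), ω ∈ cyl r s l (extP l (fun j : Fin (l+1) => (r j.val ω, s j.val ω))) := by
    intro l ω j hj
    rw [extP_eq l _ j hj]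
    exact ⟨rfl, rfl⟩
  have hTE : t ∩ E = ⋃ d ∈ F, cyl r s (k+1) (extP (k+1) d) := by
    ext ω
    constructor
    · rintro ⟨hωt, hωE⟩
      obtain ⟨d, hdS, hωd⟩ := Set.mem_iUnion₂.1 hωt
      refine Set.mem_iUnion₂.2 ⟨d, Finset.mem_filter.2 ⟨hdS, ?_⟩, hωd⟩
      intro j
      have h1 := hωd j.val ((Nat.lt_succ_iff.1 j.isLt).trans (Nat.le_succ k))
      rw [extP_eq (k+1) d j.val ((Nat.lt_succ_iff.1 j.isLt).trans (Nat.le_succ k))] at h1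
      have h2 := hωE j.val (Nat.lt_succ_iff.1 j.isLt)
      rw [extP_eq k d₀ j.val (Nat.lt_succ_iff.1 j.isLt)] at h2
      exact Prod.ext (h1.1.symm.trans h2.1) (h1.2.symm.trans h2.2)
    · intro hω
      obtain ⟨d, hdF, hωd⟩ := Set.mem_iUnion₂.1 hω
      obtain ⟨hdS, hdp⟩ := Finset.mem_filter.1 hdF
      refine ⟨Set.mem_iUnion₂.2 ⟨d, hdS, hωd⟩, ?_⟩
      intro j hj
      have := hωd j (hj.trans (Nat.le_succ k))
      rwa [hagree d hdp j hj] at this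
  refine le_antisymm ?_ ?_
  · -- upper bound
    set u := ⋃ d ∈ S, toMeasurable μ (cyl r s (k+1) (extP (k+1) d)) with hu
    have humeas : MeasurableSet u :=
      MeasurableSet.biUnion S.countable_toSet (fun d _ => measurableSet_toMeasurable μ _)
    have htu : t ⊆ u := by
      intro ω hω
      obtain ⟨d, hdS, hωd⟩ := Set.mem_iUnion₂.1 hω
      exact Set.mem_iUnion₂.2 ⟨d, hdS, subset_toMeasurable μ _ hωd⟩
    have hEsub : u ∩ E ⊆ ⋃ d' ∈ Finset.univ.filter pred, u ∩ cyl r s (k+1) (extP (k+1) d') := by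
      rintro ω ⟨hωu, hωE⟩
      exact Set.mem_iUnion₂.2 ⟨fun j : Fin (k+2) => (r j.val ω, s j.val ω),
        Finset.mem_filter.2 ⟨Finset.mem_univ _, hmem_pred ω hωE⟩, hωu, hself (k+1) ω⟩
    calc μ.restrict E t ≤ μ.restrict E u := measure_mono htu
      _ = μ (u ∩ E) := Measure.restrict_apply humeas
      _ ≤ ∑ d' ∈ Finset.univ.filter pred, μ (u ∩ cyl r s (k+1) (extP (k+1) d')) :=
          le_trans (measure_mono hEsub) (measure_biUnion_finset_le _ _)
      _ ≤ ∑ d' ∈ Finset.univ.filter pred,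
            (if d' ∈ S then ENNReal.ofReal (W P Q r₀ s₀ (extP (k+1) d') (k+1)) else 0) := by
          refine Finset.sum_le_sum (fun d' _ => ?_)
          have hsubU : u ∩ cyl r s (k+1) (extP (k+1) d')
              ⊆ ⋃ d ∈ S, (toMeasurable μ (cyl r s (k+1) (extP (k+1) d))
                  ∩ toMeasurable μ (cyl r s (k+1) (extP (k+1) d'))) := by
            rintro ω ⟨hωu, hωd'⟩
            obtain ⟨d, hdS, hωd⟩ := Set.mem_iUnion₂.1 hωu
            exact Set.mem_iUnion₂.2 ⟨d, hdS, hωd, subset_toMeasurable μ _ hωd'⟩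
          calc μ (u ∩ cyl r s (k+1) (extP (k+1) d'))
              ≤ ∑ d ∈ S, μ (toMeasurable μ (cyl r s (k+1) (extP (k+1) d))
                  ∩ toMeasurable μ (cyl r s (k+1) (extP (k+1) d'))) :=
                le_trans (measure_mono hsubU) (measure_biUnion_finset_le _ _)
            _ ≤ ∑ d ∈ S, (if d = d' then ENNReal.ofReal (W P Q r₀ s₀ (extP (k+1) d') (k+1))
                  else 0) := by
                refine Finset.sum_le_sum (fun d _ => ?_)
                by_cases hdd : d = d'
                · rw [if_pos hdd, hdd, Set.inter_self]
                  rw [measure_toMeasurable]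
                  exact le_of_eq (mu_cyl_eq μ r s P Q r₀ s₀ hP hQ hr0 hs0 hpm (k+1) d')
                · rw [if_neg hdd,
                    hull_inter μ r s P Q r₀ s₀ hP hQ hr0 hs0 hpm (k+1) hdd]
            _ = (if d' ∈ S then ENNReal.ofReal (W P Q r₀ s₀ (extP (k+1) d') (k+1)) else 0) :=
                Finset.sum_ite_eq' S d' _
      _ = ∑ d ∈ F, ENNReal.ofReal (W P Q r₀ s₀ (extP (k+1) d) (k+1)) := by
          rw [Finset.sum_ite_mem]
          refine Finset.sum_congr ?_ (fun _ _ => rfl)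
          ext d
          simp only [hF, Finset.mem_inter, Finset.mem_filter, Finset.mem_univ, true_and, and_comm]
  · -- lower bound
    calc ∑ d ∈ F, ENNReal.ofReal (W P Q r₀ s₀ (extP (k+1) d) (k+1))
        = μ (⋃ d ∈ F, cyl r s (k+1) (extP (k+1) d)) :=
          (mu_biUnion_cyl μ r s P Q r₀ s₀ hP hQ hr0 hs0 hpm (k+1) F).symm
      _ = μ (t ∩ E) := by rw [hTE]
      _ ≤ μ.restrict E t := Measure.le_restrict_apply _ _
variable (T : ℕ) [NeZero T] (Λ : Set (Fin M)) (τ₀ : ℤ) (σ₀ : Fin N)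

open Classical in
noncomputable def dtau (e : ℕ → Fin N × Fin M) (k : ℕ) : ℤ :=
  if ∃ j ≤ k, (e j).2 ∈ Λ then ((Nat.findGreatest (fun j => (e j).2 ∈ Λ) k : ℕ) : ℤ) else τ₀

open Classical in
noncomputable def dsig (e : ℕ → Fin N × Fin M) (k : ℕ) : Fin N :=
  if ∃ j ≤ k, (e j).2 ∈ Λ then (e (Nat.findGreatest (fun j => (e j).2 ∈ Λ) k)).1 else σ₀

noncomputable def thetaHat (e : ℕ → Fin N × Fin M) (k : ℕ) : Fin N × Fin M × Fin N × Fin T :=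
  ((e k).1, (e k).2, dsig Λ σ₀ e k, flT T ((k:ℤ) + 1 - dtau Λ τ₀ e k))

omit [MeasurableSpace Ω] in
lemma findGreatest_congr' (p q : ℕ → Prop) [DecidablePred p] [DecidablePred q] :
    ∀ (k : ℕ), (∀ j ≤ k, p j ↔ q j) → Nat.findGreatest p k = Nat.findGreatest q k
  | 0, _ => rfl
  | (k+1), h => by
      rw [Nat.findGreatest_succ, Nat.findGreatest_succ]
      by_cases hp : p (k+1)
      · rw [if_pos hp, if_pos ((h (k+1) le_rfl).1 hp)]
      · rw [if_neg hp, if_neg (fun hq => hp ((h (k+1) le_rfl).2 hq))]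
        exact findGreatest_congr' p q k (fun j hj => h j (hj.trans (Nat.le_succ k)))

lemma tau_sig_on_cyl (e : ℕ → Fin N × Fin M) (l : ℕ) (ω : Ω) (hω : ω ∈ cyl r s l e)
    (k : ℕ) (hk : k ≤ l) :
    tauProc Λ s τ₀ k ω = dtau Λ τ₀ e k ∧ sigmaProc Λ r s σ₀ k ω = dsig Λ σ₀ e k := by
  classical
  have hiff : ∀ j ≤ k, ((s j ω ∈ Λ) ↔ ((e j).2 ∈ Λ)) := fun j hj => by
    rw [(hω j (hj.trans hk)).2]
  have hex : (∃ j ≤ k, s j ω ∈ Λ) ↔ (∃ j ≤ k, (e j).2 ∈ Λ) := by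
    constructor
    · rintro ⟨j, hj, hjΛ⟩
      exact ⟨j, hj, (hiff j hj).1 hjΛ⟩
    · rintro ⟨j, hj, hjΛ⟩
      exact ⟨j, hj, (hiff j hj).2 hjΛ⟩
  have hfg : Nat.findGreatest (fun j => s j ω ∈ Λ) k
      = Nat.findGreatest (fun j => (e j).2 ∈ Λ) k :=
    findGreatest_congr' _ _ k hiff
  constructor
  · simp only [tauProc, dtau]
    by_cases h : ∃ j ≤ k, (e j).2 ∈ Λ
    · rw [if_pos (hex.2 h), if_pos h, hfg]
    · rw [if_neg (fun hc => h (hex.1 hc)), if_neg h]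
  · simp only [sigmaProc, dsig]
    by_cases h : ∃ j ≤ k, (e j).2 ∈ Λ
    · rw [if_pos (hex.2 h), if_pos h, hfg]
      exact (hω _ ((Nat.findGreatest_le k).trans hk)).1
    · rw [if_neg (fun hc => h (hex.1 hc)), if_neg h]

lemma rbar_on_cyl (e : ℕ → Fin N × Fin M) (l : ℕ) (ω : Ω) (hω : ω ∈ cyl r s l e)
    (k : ℕ) (hk : k ≤ l) :
    rbar T Λ r s τ₀ σ₀ k ω = thetaHat T Λ τ₀ σ₀ e k := by
  obtain ⟨ht, hs'⟩ := tau_sig_on_cyl r s Λ τ₀ σ₀ e l ω hω k hk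
  simp only [rbar, thetaHat, ht, hs', (hω k hk).1, (hω k hk).2]

omit [MeasurableSpace Ω] in
lemma dtau_congr (e e' : ℕ → Fin N × Fin M) (k : ℕ) (h : ∀ j ≤ k, e j = e' j) :
    dtau Λ τ₀ e k = dtau Λ τ₀ e' k ∧ dsig Λ σ₀ e k = dsig Λ σ₀ e' k := by
  classical
  have hiff : ∀ j ≤ k, (((e j).2 ∈ Λ) ↔ ((e' j).2 ∈ Λ)) := fun j hj => by rw [h j hj]
  have hex : (∃ j ≤ k, (e j).2 ∈ Λ) ↔ (∃ j ≤ k, (e' j).2 ∈ Λ) := by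
    constructor
    · rintro ⟨j, hj, hjΛ⟩
      exact ⟨j, hj, (hiff j hj).1 hjΛ⟩
    · rintro ⟨j, hj, hjΛ⟩
      exact ⟨j, hj, (hiff j hj).2 hjΛ⟩
  have hfg : Nat.findGreatest (fun j => (e j).2 ∈ Λ) k
      = Nat.findGreatest (fun j => (e' j).2 ∈ Λ) k :=
    findGreatest_congr' _ _ k hiff
  constructor
  · simp only [dtau]
    by_cases hc : ∃ j ≤ k, (e' j).2 ∈ Λ
    · rw [if_pos (hex.2 hc), if_pos hc, hfg]
    · rw [if_neg (fun hc' => hc (hex.1 hc')), if_neg hc]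
  · simp only [dsig]
    by_cases hc : ∃ j ≤ k, (e' j).2 ∈ Λ
    · rw [if_pos (hex.2 hc), if_pos hc, hfg, h _ (Nat.findGreatest_le k)]
    · rw [if_neg (fun hc' => hc (hex.1 hc')), if_neg hc]

omit [MeasurableSpace Ω] in
lemma dtau_succ_mem (e : ℕ → Fin N × Fin M) (k : ℕ) (h : (e (k+1)).2 ∈ Λ) :
    dtau Λ τ₀ e (k+1) = ((k+1 : ℕ) : ℤ) ∧ dsig Λ σ₀ e (k+1) = (e (k+1)).1 := by
  classical
  have hexx : ∃ j ≤ k+1, (e j).2 ∈ Λ := ⟨k+1, le_rfl, h⟩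
  have hfg : Nat.findGreatest (fun j => (e j).2 ∈ Λ) (k+1) = k+1 := by
    rw [Nat.findGreatest_succ, if_pos h]
  constructor
  · simp only [dtau]
    rw [if_pos hexx, hfg]
  · simp only [dsig]
    rw [if_pos hexx, hfg]

omit [MeasurableSpace Ω] in
lemma dtau_succ_not_mem (e : ℕ → Fin N × Fin M) (k : ℕ) (h : (e (k+1)).2 ∉ Λ) :
    dtau Λ τ₀ e (k+1) = dtau Λ τ₀ e k ∧ dsig Λ σ₀ e (k+1) = dsig Λ σ₀ e k := by
  classical
  have hexx : (∃ j ≤ k+1, (e j).2 ∈ Λ) ↔ (∃ j ≤ k, (e j).2 ∈ Λ) := by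
    constructor
    · rintro ⟨j, hj, hjΛ⟩
      rcases Nat.lt_or_ge j (k+1) with h1 | h1
      · exact ⟨j, Nat.lt_succ_iff.1 h1, hjΛ⟩
      · exact absurd ((le_antisymm hj h1) ▸ hjΛ) h
    · rintro ⟨j, hj, hjΛ⟩
      exact ⟨j, hj.trans (Nat.le_succ k), hjΛ⟩
  have hfg : Nat.findGreatest (fun j => (e j).2 ∈ Λ) (k+1)
      = Nat.findGreatest (fun j => (e j).2 ∈ Λ) k := by
    rw [Nat.findGreatest_succ, if_neg h]
  constructor
  · simp only [dtau]
    by_cases hc : ∃ j ≤ k, (e j).2 ∈ Λ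
    · rw [if_pos (hexx.2 hc), if_pos hc, hfg]
    · rw [if_neg (fun hc' => hc (hexx.1 hc')), if_neg hc]
  · simp only [dsig]
    by_cases hc : ∃ j ≤ k, (e j).2 ∈ Λ
    · rw [if_pos (hexx.2 hc), if_pos hc, hfg]
    · rw [if_neg (fun hc' => hc (hexx.1 hc')), if_neg hc]
lemma isMarkov_rbar (hP : RowStochastic P) (hQ : RowStochastic Q)
    (hr0 : ∀ ω, r 0 ω = r₀) (hs0 : ∀ ω, s 0 ω = s₀)
    (hpm : IsPairMarkov μ r s P Q) :
    IsMarkov μ (rbar T Λ r s τ₀ σ₀) (pbar P Q Λ) := by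
  classical
  intro k c hne χ'
  set d₀ : Fin (k+1) → Fin N × Fin M := fun j => ((c j.val).1, (c j.val).2.1) with hd₀
  have hself : ∀ (l : ℕ) (ω : Ω),
      ω ∈ cyl r s l (extP l (fun j : Fin (l+1) => (r j.val ω, s j.val ω))) := by
    intro l ω j hj
    rw [extP_eq l _ j hj]
    exact ⟨rfl, rfl⟩
  -- nonemptiness and compatibility
  have hEne : {ω | ∀ i ≤ k, rbar T Λ r s τ₀ σ₀ i ω = c i}.Nonempty := by
    rw [Set.nonempty_iff_ne_empty]
    intro hemp
    exact hne (by rw [hemp]; exact measure_empty)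
  obtain ⟨ω₀, hω₀⟩ := hEne
  have hω₀cyl : ω₀ ∈ cyl r s k (extP k d₀) := by
    intro j hj
    rw [extP_eq k d₀ j hj]
    exact ⟨congrArg Prod.fst (hω₀ j hj), congrArg (fun p => p.2.1) (hω₀ j hj)⟩
  have hcompat : ∀ i ≤ k, thetaHat T Λ τ₀ σ₀ (extP k d₀) i = c i := by
    intro i hi
    rw [← rbar_on_cyl r s T Λ τ₀ σ₀ (extP k d₀) k ω₀ hω₀cyl i hi]
    exact hω₀ i hi
  have hEcyl : {ω | ∀ i ≤ k, rbar T Λ r s τ₀ σ₀ i ω = c i} = cyl r s k (extP k d₀) := by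
    ext ω
    constructor
    · intro hω j hj
      rw [extP_eq k d₀ j hj]
      exact ⟨congrArg Prod.fst (hω j hj), congrArg (fun p => p.2.1) (hω j hj)⟩
    · intro hω i hi
      rw [rbar_on_cyl r s T Λ τ₀ σ₀ (extP k d₀) k ω hω i hi]
      exact hcompat i hi
  -- the target event as a union of cylinders
  set Sχ : Finset (Fin (k+2) → Fin N × Fin M) :=
    Finset.univ.filter (fun d => thetaHat T Λ τ₀ σ₀ (extP (k+1) d) (k+1) = χ') with hSχ
  have hT : {ω | rbar T Λ r s τ₀ σ₀ (k+1) ω = χ'}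
      = ⋃ d ∈ Sχ, cyl r s (k+1) (extP (k+1) d) := by
    ext ω
    constructor
    · intro hω
      refine Set.mem_iUnion₂.2 ⟨fun j : Fin (k+2) => (r j.val ω, s j.val ω),
        Finset.mem_filter.2 ⟨Finset.mem_univ _, ?_⟩, hself (k+1) ω⟩
      rw [← rbar_on_cyl r s T Λ τ₀ σ₀ _ (k+1) ω (hself (k+1) ω) (k+1) le_rfl]
      exact hω
    · intro hω
      obtain ⟨d, hdS, hωd⟩ := Set.mem_iUnion₂.1 hω
      have hrb := rbar_on_cyl r s T Λ τ₀ σ₀ (extP (k+1) d) (k+1) ω hωd (k+1) le_rfl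
      rw [Set.mem_setOf_eq, hrb]
      exact (Finset.mem_filter.1 hdS).2
  -- the candidate extension
  set dχ : Fin (k+2) → Fin N × Fin M := Fin.snoc d₀ (χ'.1, χ'.2.1) with hdχ
  have hagree' : ∀ j ≤ k, extP (k+1) dχ j = extP k d₀ j := by
    intro j hj
    rw [extP_eq (k+1) dχ j (hj.trans (Nat.le_succ k)), extP_eq k d₀ j hj,
      show (⟨j, Nat.lt_succ_of_le (hj.trans (Nat.le_succ k))⟩ : Fin (k+2))
        = (⟨j, Nat.lt_succ_of_le hj⟩ : Fin (k+1)).castSucc from Fin.ext rfl]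
    rw [hdχ]
    rw [Fin.snoc_castSucc]
  have he1 : extP (k+1) dχ (k+1) = (χ'.1, χ'.2.1) := by
    rw [extP_eq (k+1) dχ (k+1) le_rfl,
      show (⟨k+1, Nat.lt_succ_of_le le_rfl⟩ : Fin (k+2)) = Fin.last (k+1) from Fin.ext rfl]
    rw [hdχ]
    rw [Fin.snoc_last]
  have hek : extP (k+1) dχ k = ((c k).1, (c k).2.1) := by
    rw [hagree' k le_rfl, extP_eq k d₀ k le_rfl]
  -- the value of thetaHat at time k+1 on the extension
  have hθk := hcompat k le_rfl
  have hσk : dsig Λ σ₀ (extP k d₀) k = (c k).2.2.1 := congrArg (fun p => p.2.2.1) hθk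
  have hδk : flT T ((k:ℤ) + 1 - dtau Λ τ₀ (extP k d₀) k) = (c k).2.2.2 :=
    congrArg (fun p => p.2.2.2) hθk
  have hθχ : thetaHat T Λ τ₀ σ₀ (extP (k+1) dχ) (k+1)
      = (χ'.1, χ'.2.1, (if χ'.2.1 ∈ Λ then χ'.1 else (c k).2.2.1),
         (if χ'.2.1 ∈ Λ then flT T 1 else (c k).2.2.2 + 1)) := by
    have he1' : (extP (k+1) dχ (k+1)).2 = χ'.2.1 := by rw [he1]
    by_cases hΛ' : χ'.2.1 ∈ Λ
    · obtain ⟨htau, hsig⟩ := dtau_succ_mem Λ τ₀ σ₀ (extP (k+1) dχ) k (by rw [he1']; exact hΛ')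
      simp only [thetaHat, he1, htau, hsig, if_pos hΛ']
      have harg : ((k+1 : ℕ) : ℤ) + 1 - ((k+1 : ℕ) : ℤ) = 1 := by push_cast; ring
      rw [harg]
    · obtain ⟨htau, hsig⟩ := dtau_succ_not_mem Λ τ₀ σ₀ (extP (k+1) dχ) k
        (by rw [he1']; exact hΛ')
      obtain ⟨htau2, hsig2⟩ := dtau_congr Λ τ₀ σ₀ (extP (k+1) dχ) (extP k d₀) k hagree'
      simp only [thetaHat, he1, htau, hsig, htau2, hsig2, if_neg hΛ', hσk]
      have harg : ((k+1 : ℕ) : ℤ) + 1 - dtau Λ τ₀ (extP k d₀) k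
          = ((k:ℤ) + 1 - dtau Λ τ₀ (extP k d₀) k) + 1 := by push_cast; ring
      rw [harg, flT_succ, hδk]
  have hmem_iff : thetaHat T Λ τ₀ σ₀ (extP (k+1) dχ) (k+1) = χ'
      ↔ (if χ'.2.1 ∈ Λ then χ'.1 = χ'.2.2.1 ∧ χ'.2.2.2 = flT T 1
         else χ'.2.2.1 = (c k).2.2.1 ∧ χ'.2.2.2 = (c k).2.2.2 + 1) := by
    rw [hθχ]
    by_cases hΛ' : χ'.2.1 ∈ Λ
    · rw [if_pos hΛ', if_pos hΛ', if_pos hΛ']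
      rw [Prod.ext_iff, Prod.ext_iff, Prod.ext_iff]
      simp only [eq_self_iff_true, true_and]
      exact and_congr Iff.rfl eq_comm
    · rw [if_neg hΛ', if_neg hΛ', if_neg hΛ']
      rw [Prod.ext_iff, Prod.ext_iff, Prod.ext_iff]
      simp only [eq_self_iff_true, true_and]
      exact and_congr eq_comm eq_comm
  -- positivity of the weight
  have hμE : μ (cyl r s k (extP k d₀)) = ENNReal.ofReal (W P Q r₀ s₀ (extP k d₀) k) :=
    mu_cyl_eq μ r s P Q r₀ s₀ hP hQ hr0 hs0 hpm k d₀
  have hne' : μ (cyl r s k (extP k d₀)) ≠ 0 := by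
    rw [← hEcyl]
    exact hne
  have hW0 : 0 < W P Q r₀ s₀ (extP k d₀) k := by
    rcases lt_or_ge 0 (W P Q r₀ s₀ (extP k d₀) k) with h | h
    · exact h
    · exact absurd (by rw [hμE, ENNReal.ofReal_eq_zero.2 h]) (fun hh => hne' hh)
  -- main computation
  rw [cond_eq μ, hEcyl, hT,
    restrict_biUnion μ r s P Q r₀ s₀ hP hQ hr0 hs0 hpm k d₀ Sχ, hμE]
  by_cases hcond : thetaHat T Λ τ₀ σ₀ (extP (k+1) dχ) (k+1) = χ'
  · -- the filter is the singleton {dχ}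
    have hfil : Sχ.filter (fun d => ∀ j : Fin (k+1), d j.castSucc = d₀ j) = {dχ} := by
      ext d
      rw [Finset.mem_filter, Finset.mem_singleton, hSχ, Finset.mem_filter]
      constructor
      · rintro ⟨⟨_, hdθ⟩, hdpred⟩
        funext j
        refine Fin.lastCases ?_ (fun i => ?_) j
        · have h1 : (extP (k+1) d (k+1)).1 = χ'.1 := congrArg Prod.fst hdθ
          have h2 : (extP (k+1) d (k+1)).2 = χ'.2.1 := congrArg (fun p => p.2.1) hdθ
          rw [extP_eq (k+1) d (k+1) le_rfl] at h1 h2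
          rw [hdχ, Fin.snoc_last]
          exact Prod.ext h1 h2
        · rw [hdχ, Fin.snoc_castSucc]
          exact hdpred i
      · intro hd
        subst hd
        refine ⟨⟨Finset.mem_univ _, hcond⟩, fun j => ?_⟩
        rw [hdχ, Fin.snoc_castSucc]
    rw [hfil, Finset.sum_singleton]
    have hWχ : W P Q r₀ s₀ (extP (k+1) dχ) (k+1)
        = W P Q r₀ s₀ (extP k d₀) k * (P (c k).1 χ'.1 * Q (c k).2.1 χ'.2.1) := by
      rw [show W P Q r₀ s₀ (extP (k+1) dχ) (k+1)
          = W P Q r₀ s₀ (extP (k+1) dχ) k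
            * pairTrans P Q (extP (k+1) dχ k) (extP (k+1) dχ (k+1)) from rfl]
      rw [W_congr P Q r₀ s₀ hagree', hek, he1]
      rfl
    have hpbar : pbar P Q Λ (c k) χ' = P (c k).1 χ'.1 * Q (c k).2.1 χ'.2.1 := by
      have hc2 := hmem_iff.1 hcond
      simp only [pbar]
      by_cases hΛ' : χ'.2.1 ∈ Λ
      · rw [if_pos hΛ'] at hc2 ⊢
        rw [if_pos hc2]
      · rw [if_neg hΛ'] at hc2 ⊢
        rw [if_pos hc2]
    rw [hpbar, hWχ, ENNReal.ofReal_mul hW0.le, ← mul_assoc,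
      ENNReal.inv_mul_cancel (by rwa [← hμE]) ENNReal.ofReal_ne_top, one_mul]
  · -- the filter is empty
    have hfil : Sχ.filter (fun d => ∀ j : Fin (k+1), d j.castSucc = d₀ j) = ∅ := by
      ext d
      rw [Finset.mem_filter, hSχ, Finset.mem_filter]
      simp only [Finset.notMem_empty, iff_false]
      rintro ⟨⟨_, hdθ⟩, hdpred⟩
      apply hcond
      have hdd : d = dχ := by
        funext j
        refine Fin.lastCases ?_ (fun i => ?_) j
        · have h1 : (extP (k+1) d (k+1)).1 = χ'.1 := congrArg Prod.fst hdθ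
          have h2 : (extP (k+1) d (k+1)).2 = χ'.2.1 := congrArg (fun p => p.2.1) hdθ
          rw [extP_eq (k+1) d (k+1) le_rfl] at h1 h2
          rw [hdχ, Fin.snoc_last]
          exact Prod.ext h1 h2
        · rw [hdχ, Fin.snoc_castSucc]
          exact hdpred i
      rw [← hdd]
      exact hdθ
    have hpbar : pbar P Q Λ (c k) χ' = 0 := by
      have hc2 := hmem_iff.not.1 hcond
      simp only [pbar]
      by_cases hΛ' : χ'.2.1 ∈ Λ
      · rw [if_pos hΛ'] at hc2 ⊢
        rw [if_neg hc2]
      · rw [if_neg hΛ'] at hc2 ⊢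
        rw [if_neg hc2]
    rw [hfil, Finset.sum_empty, hpbar, ENNReal.ofReal_zero, mul_zero]
lemma rbar_zero_det (hr0 : ∀ ω, r 0 ω = r₀) (hs0 : ∀ ω, s 0 ω = s₀) (ω ω' : Ω) :
    rbar T Λ r s τ₀ σ₀ 0 ω = rbar T Λ r s τ₀ σ₀ 0 ω' := by
  have h : ∀ ω'' : Ω, rbar T Λ r s τ₀ σ₀ 0 ω''
      = thetaHat T Λ τ₀ σ₀ (fun _ => (r₀, s₀)) 0 := by
    intro ω''
    refine rbar_on_cyl r s T Λ τ₀ σ₀ (fun _ => (r₀, s₀)) 0 ω'' ?_ 0 le_rfl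
    intro j hj
    rw [Nat.le_zero] at hj
    subst hj
    exact ⟨hr0 ω'', hs0 ω''⟩
  rw [h ω, h ω']
end
end StabProof

/-- If the gains `K̄_χ` satisfy `K̄_{(α,β,γ,δ)} = K̄_{(α',β',γ,δ)}`
and mean-square stabilize (uniformly, with constants `C > 0`, `ε ∈ [0,1)`) every
time-homogeneous Markov chain `θ` on `X̄` with transition matrix `p̄` and deterministic
initial state, driving the system `x̄(k+1) = (A_{α(θ(k))} + B_{α(θ(k))} K̄_{θ(k)}) x̄(k)`,
then the gains `K_{γ,δ} = K̄_{(1,1,γ,δ)}` stabilize `(Σ, 𝒯_{s,Λ})`.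
(Here the state `1 ∈ {1,…,N}` is encoded as `0 : Fin N`, similarly for `Fin M`.) -/
theorem stabilization_via_extended_chain
    {n m N M T : ℕ} [NeZero n] [NeZero m] [NeZero N] [NeZero M] [NeZero T]
    (A : Fin N → Matrix (Fin n) (Fin n) ℝ) (B : Fin N → Matrix (Fin n) (Fin m) ℝ)
    (P : Matrix (Fin N) (Fin N) ℝ) (Q : Matrix (Fin M) (Fin M) ℝ)
    (hP : RowStochastic P) (hQ : RowStochastic Q)
    (Λ : Set (Fin M)) (hΛ : Λ.Nonempty)
    (Kbar : Fin N × Fin M × Fin N × Fin T → Matrix (Fin m) (Fin n) ℝ)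
    (hconst : ∀ (α α' : Fin N) (β β' : Fin M) (γ : Fin N) (δ : Fin T),
      Kbar (α, β, γ, δ) = Kbar (α', β', γ, δ))
    (hstab : ∃ C > (0:ℝ), ∃ ε ∈ Set.Ico (0:ℝ) 1,
      ∀ (Ω : Type) [MeasurableSpace Ω] (μ : Measure Ω), IsProbabilityMeasure μ →
      ∀ θ : ℕ → Ω → Fin N × Fin M × Fin N × Fin T,
        IsMarkov μ θ (pbar P Q Λ) → (∀ ω ω' : Ω, θ 0 ω = θ 0 ω') →
        ∀ (x₀ : EuclideanSpace ℝ (Fin n)) (x : ℕ → Ω → EuclideanSpace ℝ (Fin n)),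
          (∀ ω, x 0 ω = x₀) →
          (∀ (k : ℕ) (ω : Ω), x (k+1) ω =
            Matrix.toEuclideanLin (A (θ k ω).1 + B (θ k ω).1 * Kbar (θ k ω)) (x k ω)) →
          ∀ k : ℕ, ∫ ω, ‖x k ω‖^2 ∂μ ≤ C * ε^k * ‖x₀‖^2) :
    StabilizesOn A B P Q Λ Set.univ (fun γ δ => Kbar (0, 0, γ, δ)) := by
  obtain ⟨C, hC, ε, hε, hmain⟩ := hstab
  refine ⟨C, hC, ε, hε, ?_⟩
  intro Ω _ μ hprob r s r₀ s₀ _hs₀S hr0 hs0 hpm _hinf τ₀ _hτ σ₀ x₀ x hx0 hxrec k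
  haveI := hprob
  refine hmain Ω μ hprob (rbar T Λ r s τ₀ σ₀)
    (StabProof.isMarkov_rbar (μ := μ) (r := r) (s := s) (P := P) (Q := Q) (r₀ := r₀)
      (s₀ := s₀) (T := T) (Λ := Λ) (τ₀ := τ₀) (σ₀ := σ₀) hP hQ hr0 hs0 hpm)
    (fun ω ω' => StabProof.rbar_zero_det (r := r) (s := s) (r₀ := r₀) (s₀ := s₀)
      (T := T) (Λ := Λ) (τ₀ := τ₀) (σ₀ := σ₀) hr0 hs0 ω ω')
    x₀ x hx0 ?_ k
  intro k' ω
  rw [hxrec k' ω]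
  have hKb := hconst 0 (r k' ω) 0 (s k' ω) (sigmaProc Λ r s σ₀ k' ω)
    (flT T ((k' : ℤ) + 1 - tauProc Λ s τ₀ k' ω))
  simp only [hKb]
  rfl
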